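/- Let G be a singular bipartite digraph on a finite vertex type V with at least 2 vertices and let v ∈ V be both dextro-core-forbidden and laevo-core-forbidden. Then η(G − v) = η(G) + 1. -/

import Mathlib

open Matrix Finset
open scoped Classical

variable {V : Type*} [Fintype V] [DecidableEq V]
variable {W : Type*} [Fintype W] [DecidableEq W]

/-- Adjacency matrix of a digraph `G` on `V`. -/
noncomputable def adjMat (G : V → V → Prop) : Matrix V V ℝ :=
  Matrix.of fun u v => if G u v then (1 : ℝ) else 0

/-- The kernel of a digraph. -/
def KerD (G : V → V → Prop) : Set (V → ℝ) := {x | (adjMat G).mulVec x = 0}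

/-- The cokernel of a digraph. -/
def CoKerD (G : V → V → Prop) : Set (V → ℝ) := {x | (adjMat G)ᵀ.mulVec x = 0}

/-- A vector is full if it has no zero entries. -/
def Full (x : V → ℝ) : Prop := ∀ v, x v ≠ 0

/-- Dextro-nut digraph: the kernel is one-dimensional, spanned by a full vector. -/
def IsDextroNut (G : V → V → Prop) : Prop :=
  ∃ x ∈ KerD G, Full x ∧ ∀ y ∈ KerD G, ∃ c : ℝ, y = c • x

/-- Laevo-nut digraph: the cokernel is one-dimensional, spanned by a full vector. -/
def IsLaevoNut (G : V → V → Prop) : Prop :=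
  ∃ x ∈ CoKerD G, Full x ∧ ∀ y ∈ CoKerD G, ∃ c : ℝ, y = c • x

/-- Bi-nut digraph: both dextro-nut and laevo-nut. -/
def IsBiNut (G : V → V → Prop) : Prop := IsDextroNut G ∧ IsLaevoNut G

/-- Ambi-nut digraph: one full vector spans both kernel and cokernel. -/
def IsAmbiNut (G : V → V → Prop) : Prop :=
  ∃ x : V → ℝ, Full x ∧ x ∈ KerD G ∧ x ∈ CoKerD G ∧
    (∀ y ∈ KerD G, ∃ c : ℝ, y = c • x) ∧ (∀ y ∈ CoKerD G, ∃ c : ℝ, y = c • x)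

/-- Inter-nut digraph: the intersection of kernel and cokernel is one-dimensional,
spanned by a full vector. -/
def IsInterNut (G : V → V → Prop) : Prop :=
  ∃ x : V → ℝ, Full x ∧ x ∈ KerD G ∩ CoKerD G ∧
    ∀ y ∈ KerD G ∩ CoKerD G, ∃ c : ℝ, y = c • x

/-- Nullity of a digraph: dimension of the kernel of its adjacency matrix. -/
noncomputable def nullityD (G : V → V → Prop) : ℕ :=
  Module.finrank ℝ (LinearMap.ker (adjMat G).mulVecLin)

/-- The digraph obtained by deleting vertex `v`. -/
def delV (G : V → V → Prop) (v : V) : {u : V // u ≠ v} → {u : V // u ≠ v} → Prop :=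
  fun a b => G a.1 b.1

/- ### Auxiliary material -/

lemma mySumSplit (v : V) (f : V → ℝ) :
    ∑ u, f u = f v + ∑ u : {u : V // u ≠ v}, f u.1 := by
  rw [← Finset.add_sum_erase _ f (Finset.mem_univ v)]
  congr 1
  exact Finset.sum_subtype _ (fun x => by simp [Finset.mem_erase]) _

lemma adj_delV (G : V → V → Prop) (v : V) (a b : {u : V // u ≠ v}) :
    adjMat (delV G v) a b = adjMat G a.1 b.1 := by
  by_cases h : G a.1 b.1 <;> simp [adjMat, delV, h]

/-- Extension by zero at `v`, as a linear map. -/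
def extL (v : V) : ({u : V // u ≠ v} → ℝ) →ₗ[ℝ] (V → ℝ) where
  toFun x := fun u => if h : u = v then 0 else x ⟨u, h⟩
  map_add' x y := by funext u; by_cases h : u = v <;> simp [h]
  map_smul' c x := by funext u; by_cases h : u = v <;> simp [h]

/-- Pairing with the `v`-th row of the adjacency matrix, restricted away from `v`. -/
noncomputable def phiL (G : V → V → Prop) (v : V) : ({u : V // u ≠ v} → ℝ) →ₗ[ℝ] ℝ where
  toFun x := ∑ w : {u : V // u ≠ v}, adjMat G v w.1 * x w
  map_add' x y := by simp [mul_add, Finset.sum_add_distrib]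
  map_smul' c x := by simp [Finset.mul_sum]; ring_nf; simp [mul_comm, mul_left_comm]

lemma mulVec_extL_ne (G : V → V → Prop) (v : V) (x : {u : V // u ≠ v} → ℝ)
    (u : V) (h : u ≠ v) :
    ((adjMat G) *ᵥ (extL v x)) u = ((adjMat (delV G v)) *ᵥ x) ⟨u, h⟩ := by
  simp only [Matrix.mulVec, dotProduct]
  rw [mySumSplit v]
  simp only [extL, LinearMap.coe_mk, AddHom.coe_mk, dite_eq_ite, if_true, eq_self_iff_true,
    dite_true, mul_zero, zero_add, adj_delV]
  apply Finset.sum_congr rfl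
  intro w _
  rw [dif_neg w.2]

lemma mulVec_extL_eq (G : V → V → Prop) (v : V) (x : {u : V // u ≠ v} → ℝ) :
    ((adjMat G) *ᵥ (extL v x)) v = phiL G v x := by
  simp only [Matrix.mulVec, dotProduct]
  rw [mySumSplit v]
  simp only [extL, phiL, LinearMap.coe_mk, AddHom.coe_mk, dite_eq_ite, if_true, eq_self_iff_true,
    dite_true, mul_zero, zero_add]
  apply Finset.sum_congr rfl
  intro w _
  rw [dif_neg w.2]

set_option synthInstance.maxHeartbeats 1000000 in
set_option maxHeartbeats 1000000 in
theorem stmt6 (G : V → V → Prop) (hcard : 2 ≤ Fintype.card V)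
    (hsing : 0 < nullityD G)
    (hbip : ∃ S : Set V, ∀ ⦃a b : V⦄, G a b → Xor' (a ∈ S) (b ∈ S))
    (v : V) (hd : ∀ x ∈ KerD G, x v = 0) (hl : ∀ x ∈ CoKerD G, x v = 0) :
    nullityD (delV G v) = nullityD G + 1 := by
  classical
  obtain ⟨S, hS⟩ := hbip
  set ε : V → ℝ := fun w => if w ∈ S then 1 else -1 with hε
  have heps2 : ∀ p, ε p * ε p = 1 := by
    intro p; by_cases h : p ∈ S <;> simp [hε, h]
  have hflip : ∀ p q : V, adjMat G p q * ε q = -(adjMat G p q * ε p) := by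
    intro p q
    by_cases h : G p q
    · rcases hS h with ⟨h1, h2⟩ | ⟨h1, h2⟩ <;> simp [adjMat, hε, h, h1, h2]
    · simp [adjMat, h]
  have hkey : ∀ p q : V, adjMat G p q * (ε p * ε q) = -adjMat G p q := by
    intro p q
    by_cases h : G p q
    · rcases hS h with ⟨h1, h2⟩ | ⟨h1, h2⟩ <;> simp [adjMat, hε, h, h1, h2]
    · simp [adjMat, h]
  have hvv : adjMat G v v = 0 := by
    by_cases h : G v v
    · exact absurd (hS h) (by simp [Xor'])
    · simp [adjMat, h]
  -- Step 1: `e_v` is in the column space of the adjacency matrix.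
  obtain ⟨z, hz⟩ : ∃ z, (adjMat G) *ᵥ z = Pi.single v 1 := by
    by_contra hcon
    push_neg at hcon
    have hx : (Pi.single v 1 : V → ℝ) ∉ LinearMap.range (adjMat G).mulVecLin := by
      rintro ⟨z, hz⟩
      exact hcon z (by simpa [Matrix.mulVecLin_apply] using hz)
    obtain ⟨f, hf1, hf2⟩ :=
      Submodule.exists_dual_map_eq_bot_of_notMem hx inferInstance
    set y : V → ℝ := fun u => f (fun j => if u = j then 1 else 0) with hy
    have hzero : ∀ m ∈ LinearMap.range (adjMat G).mulVecLin, f m = 0 := by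
      intro m hm
      have : f m ∈ Submodule.map f (LinearMap.range (adjMat G).mulVecLin) :=
        Submodule.mem_map_of_mem hm
      rw [hf2] at this
      simpa using this
    have hyco : y ∈ CoKerD G := by
      show (adjMat G)ᵀ.mulVec y = 0
      funext u
      have h0 : f ((adjMat G) *ᵥ Pi.single u 1) = 0 :=
        hzero _ ⟨Pi.single u 1, by simp [Matrix.mulVecLin_apply]⟩
      rw [Matrix.mulVec_single_one] at h0
      change f ((adjMat G)ᵀ u) = 0 at h0
      have h1 := LinearMap.pi_apply_eq_sum_univ f ((adjMat G)ᵀ u)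
      rw [h0] at h1
      have : ((adjMat G)ᵀ *ᵥ y) u = ∑ i, (adjMat G)ᵀ u i • f fun j => if i = j then 1 else 0 := by
        simp only [Matrix.mulVec, dotProduct, smul_eq_mul, hy]
      rw [this, ← h1]
      rfl
    have hzv : y v = 0 := hl y hyco
    apply hf1
    have : (Pi.single v 1 : V → ℝ) = fun j => if v = j then 1 else 0 := by
      funext j; simp [Pi.single_apply, eq_comm]
    rw [this]
    exact hzv
  -- restriction of z and basic identities
  have hzu : ∀ u : {u : V // u ≠ v},
      ∑ w : {u : V // u ≠ v}, adjMat G u.1 w.1 * z w.1 = -(adjMat G u.1 v * z v) := by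
    intro u
    have h0 := congrFun hz u.1
    rw [Pi.single_eq_of_ne u.2] at h0
    simp only [Matrix.mulVec, dotProduct] at h0
    rw [mySumSplit v] at h0
    linarith
  have hzv1 : ∑ w : {u : V // u ≠ v}, adjMat G v w.1 * z w.1 = 1 := by
    have h0 := congrFun hz v
    rw [Pi.single_eq_same] at h0
    simp only [Matrix.mulVec, dotProduct] at h0
    rw [mySumSplit v, hvv] at h0
    linarith
  -- the sign-flip computation
  have hstep : ∀ p : V,
      (∑ w : {u : V // u ≠ v}, adjMat G p w.1 * (ε v * ε w.1 * z w.1))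
        = -(ε v * ε p) * ∑ w : {u : V // u ≠ v}, adjMat G p w.1 * z w.1 := by
    intro p
    rw [Finset.mul_sum]
    apply Finset.sum_congr rfl
    intro w _
    linear_combination (ε v * z w.1) * hflip p w.1
  -- the witness vector in the kernel of the deleted graph with nonzero pairing
  set xx : {u : V // u ≠ v} → ℝ := fun w => z w.1 - ε v * ε w.1 * z w.1 with hxx
  have hxker : xx ∈ LinearMap.ker (adjMat (delV G v)).mulVecLin := by
    rw [LinearMap.mem_ker]
    funext u
    show ((adjMat (delV G v)) *ᵥ xx) u = 0
    simp only [Matrix.mulVec, dotProduct]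
    have : ∀ w : {u : V // u ≠ v}, adjMat (delV G v) u w * xx w
        = adjMat G u.1 w.1 * z w.1 - adjMat G u.1 w.1 * (ε v * ε w.1 * z w.1) := by
      intro w; rw [adj_delV, hxx]; ring
    rw [Finset.sum_congr rfl fun w _ => this w, Finset.sum_sub_distrib, hstep u.1, hzu u]
    linear_combination (-(z v)) * hkey u.1 v
  have hxphi : phiL G v xx = 2 := by
    show (∑ w : {u : V // u ≠ v}, adjMat G v w.1 * xx w) = 2
    have : ∀ w : {u : V // u ≠ v}, adjMat G v w.1 * xx w
        = adjMat G v w.1 * z w.1 - adjMat G v w.1 * (ε v * ε w.1 * z w.1) := by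
      intro w; rw [hxx]; ring
    rw [Finset.sum_congr rfl fun w _ => this w, Finset.sum_sub_distrib, hstep v, hzv1]
    linear_combination heps2 v
  -- rank-nullity for the pairing functional restricted to the kernel
  set K' := LinearMap.ker (adjMat (delV G v)).mulVecLin with hK'
  set ψ : K' →ₗ[ℝ] ℝ := (phiL G v).domRestrict K' with hψ
  have hsurj : Function.Surjective ψ := by
    intro r
    refine ⟨⟨(r / 2) • xx, K'.smul_mem _ hxker⟩, ?_⟩
    show phiL G v ((r / 2) • xx) = r
    rw [LinearMap.map_smul, hxphi]
    simp
  have hrank := LinearMap.finrank_range_add_finrank_ker ψ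
  rw [LinearMap.range_eq_top.mpr hsurj] at hrank
  have htop : Module.finrank ℝ (⊤ : Submodule ℝ ℝ) = 1 := by
    rw [finrank_top]; exact Module.finrank_self ℝ
  rw [htop] at hrank
  -- the kernel of ψ is isomorphic to the kernel of G
  have e : (LinearMap.ker ψ) ≃ₗ[ℝ] (LinearMap.ker (adjMat G).mulVecLin) := by
    refine
      { toFun := fun p => ⟨extL v p.1.1, ?_⟩
        map_add' := ?_
        map_smul' := ?_
        invFun := fun q => ⟨⟨fun w => q.1 w.1, ?_⟩, ?_⟩
        left_inv := ?_
        right_inv := ?_ }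
    · -- extL of a kernel-ψ element is in ker A
      obtain ⟨⟨x, hx⟩, hp⟩ := p
      have hx' : (adjMat (delV G v)) *ᵥ x = 0 := hx
      have hphi : phiL G v x = 0 := hp
      rw [LinearMap.mem_ker]
      funext u
      show ((adjMat G) *ᵥ (extL v x)) u = 0
      by_cases h : u = v
      · subst h; rw [mulVec_extL_eq]; exact hphi
      · rw [mulVec_extL_ne G v x u h]
        exact congrFun hx' ⟨u, h⟩
    · intro p q
      apply Subtype.ext
      show extL v (p.1.1 + q.1.1) = extL v p.1.1 + extL v q.1.1
      rw [map_add]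
    · intro c p
      apply Subtype.ext
      show extL v (c • p.1.1) = c • extL v p.1.1
      rw [LinearMap.map_smul]
    · -- restriction of a kernel element is in K'
      obtain ⟨x, hx⟩ := q
      have hx' : (adjMat G) *ᵥ x = 0 := hx
      have hxv : x v = 0 := hd x hx'
      rw [hK', LinearMap.mem_ker]
      funext u
      show ((adjMat (delV G v)) *ᵥ fun w => x w.1) u = 0
      have h0 := congrFun hx' u.1
      simp only [Matrix.mulVec, dotProduct, Pi.zero_apply] at h0 ⊢
      rw [mySumSplit v, hxv, mul_zero, zero_add] at h0
      rw [← h0]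
      apply Finset.sum_congr rfl
      intro w _
      rw [adj_delV]
    · -- and is killed by ψ
      obtain ⟨x, hx⟩ := q
      have hx' : (adjMat G) *ᵥ x = 0 := hx
      have hxv : x v = 0 := hd x hx'
      rw [LinearMap.mem_ker]
      show phiL G v (fun w => x w.1) = 0
      have h0 := congrFun hx' v
      simp only [Matrix.mulVec, dotProduct, Pi.zero_apply] at h0
      rw [mySumSplit v, hxv, mul_zero, zero_add] at h0
      exact h0
    · intro p
      apply Subtype.ext
      apply Subtype.ext
      funext w
      show (extL v p.1.1) w.1 = p.1.1 w
      simp only [extL, LinearMap.coe_mk, AddHom.coe_mk]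
      rw [dif_neg w.2]
    · intro q
      apply Subtype.ext
      funext u
      show (extL v (fun w => q.1 w.1)) u = q.1 u
      simp only [extL, LinearMap.coe_mk, AddHom.coe_mk]
      by_cases h : u = v
      · subst h
        rw [dif_pos rfl]
        have hx' : (adjMat G) *ᵥ q.1 = 0 := q.2
        exact (hd q.1 hx').symm
      · rw [dif_neg h]
  have hKK : Module.finrank ℝ (LinearMap.ker ψ) = nullityD G := e.finrank_eq
  show Module.finrank ℝ K' = nullityD G + 1
  omega
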